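/- Let b₀, b₃ > 0 with b₀ ≠ b₃, and for each integer n ≥ 1 let ℐ_n = ∫₀^∞ ds/((b₀+s)ⁿ·√(b₃+s)). Then for every n ≥ 1, ℐ_{n+1} = ((2n−1)/(2n·(b₀−b₃)))·ℐ_n − √(b₃)/(n·b₀ⁿ·(b₀−b₃)). -/

import Mathlib

open MeasureTheory Set Filter Real

lemma aux_integrable (b₀ b₃ : ℝ) (h₀ : 0 < b₀) (h₃ : 0 < b₃) (k : ℕ) (hk : 1 ≤ k) :
    IntegrableOn (fun s => 1 / ((b₀ + s) ^ k * Real.sqrt (b₃ + s))) (Set.Ioi 0) := by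
  set f : ℝ → ℝ := fun s => 1 / ((b₀ + s) ^ k * Real.sqrt (b₃ + s)) with hf
  set a : ℝ := max (max b₀ b₃) 1 with ha
  have ha1 : (1:ℝ) ≤ a := le_max_right _ _
  have ha0 : (0:ℝ) < a := lt_of_lt_of_le one_pos ha1
  have hcont : ∀ s : Set ℝ, (∀ x ∈ s, 0 ≤ x) → ContinuousOn f s := by
    intro s hs
    apply ContinuousOn.div continuousOn_const
    · exact (((continuous_const.add continuous_id).pow k).mul
        (Real.continuous_sqrt.comp (continuous_const.add continuous_id))).continuousOn
    · intro x hx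
      have hx0 := hs x hx
      have h1 : 0 < b₀ + x := by linarith
      have h2 : 0 < b₃ + x := by linarith
      positivity
  have h1 : IntegrableOn f (Set.Icc 0 a) :=
    (hcont _ (fun x hx => hx.1)).integrableOn_compact isCompact_Icc
  have h2 : IntegrableOn f (Set.Ioi a) := by
    have hmeas : AEStronglyMeasurable f (volume.restrict (Set.Ioi a)) :=
      (hcont _ (fun x hx => le_of_lt (lt_of_lt_of_le ha0 (le_of_lt hx)))).aestronglyMeasurable
        measurableSet_Ioi
    have hint : IntegrableOn (fun x : ℝ => x ^ (-(3/2) : ℝ)) (Set.Ioi a) :=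
      (integrableOn_Ioi_rpow_iff ha0).mpr (by norm_num)
    apply hint.mono' hmeas
    filter_upwards [ae_restrict_mem measurableSet_Ioi] with s hs
    have hs1 : (1:ℝ) ≤ s := le_of_lt (lt_of_le_of_lt ha1 hs)
    have hs0 : (0:ℝ) < s := lt_of_lt_of_le one_pos hs1
    have hb0 : 0 < b₀ + s := by linarith
    have hb3 : 0 < b₃ + s := by linarith
    have key : s * Real.sqrt s ≤ (b₀ + s) ^ k * Real.sqrt (b₃ + s) := by
      apply mul_le_mul
      · calc s ≤ b₀ + s := by linarith
          _ ≤ (b₀ + s) ^ k := le_self_pow₀ (by linarith) (by omega)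
      · exact Real.sqrt_le_sqrt (by linarith)
      · exact Real.sqrt_nonneg _
      · positivity
    have hr : s ^ (-(3/2) : ℝ) = 1 / (s * Real.sqrt s) := by
      rw [Real.rpow_neg hs0.le, Real.sqrt_eq_rpow, ← Real.rpow_one_add' hs0.le (by norm_num)]
      norm_num
    rw [hr, Real.norm_eq_abs, abs_of_nonneg (by positivity)]
    apply one_div_le_one_div_of_le (by positivity) key
  have : Set.Ioi (0:ℝ) ⊆ Set.Icc 0 a ∪ Set.Ioi a := by
    intro x hx
    rcases le_or_gt x a with h | h
    · exact Or.inl ⟨le_of_lt hx, h⟩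
    · exact Or.inr h
  exact (h1.union h2).mono_set this


lemma aux_deriv (b₀ b₃ : ℝ) (m : ℕ) {s : ℝ} (hb0 : 0 < b₀ + s) (hb3 : 0 < b₃ + s) :
    HasDerivAt (fun t => Real.sqrt (b₃ + t) * ((b₀ + t) ^ (m+1))⁻¹)
      (((m:ℝ)+1) * (b₀ - b₃) * (1 / ((b₀ + s) ^ (m+2) * Real.sqrt (b₃ + s)))
        - (2*((m:ℝ)+1) - 1)/2 * (1 / ((b₀ + s) ^ (m+1) * Real.sqrt (b₃ + s)))) s := by
  have hsq : HasDerivAt (fun t => Real.sqrt (b₃ + t)) (1 / (2 * Real.sqrt (b₃ + s))) s := by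
    have h1 : HasDerivAt (fun t : ℝ => b₃ + t) 1 s := (hasDerivAt_id s).const_add b₃
    simpa [Function.comp_def] using (Real.hasDerivAt_sqrt hb3.ne').comp s h1
  have hpowinner : HasDerivAt (fun t : ℝ => (b₀ + t) ^ (m+1)) (((m:ℝ)+1) * (b₀+s)^m) s := by
    have h1 : HasDerivAt (fun t : ℝ => b₀ + t) 1 s := (hasDerivAt_id s).const_add b₀
    simpa using h1.fun_pow (m+1)
  have hpow : HasDerivAt (fun t : ℝ => ((b₀ + t) ^ (m+1))⁻¹)
      (-(((m:ℝ)+1) * (b₀+s)^m) / ((b₀+s)^(m+1))^2) s :=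
    hpowinner.inv (pow_ne_zero _ hb0.ne')
  have H := hsq.fun_mul hpow
  convert H using 1
  · rfl
  · rfl
  obtain ⟨q, hq0, hq2⟩ : ∃ q : ℝ, 0 < q ∧ q ^ 2 = b₃ + s :=
    ⟨Real.sqrt (b₃ + s), Real.sqrt_pos.mpr hb3, Real.sq_sqrt hb3.le⟩
  rw [show Real.sqrt (b₃ + s) = q from by rw [← hq2, Real.sqrt_sq hq0.le]]
  rw [show b₀ - b₃ = (b₀ + s) - q ^ 2 by rw [hq2]; ring]
  rw [show ((m:ℕ)+2) = (m+1)+1 from rfl, pow_succ _ (m+1), pow_succ _ m]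
  have hp : (b₀ + s) ≠ 0 := hb0.ne'
  field_simp
  ring


theorem In_recursion (b₀ b₃ : ℝ) (h₀ : 0 < b₀) (h₃ : 0 < b₃) (hne : b₀ ≠ b₃)
    (I : ℕ → ℝ)
    (hI : ∀ n : ℕ, 1 ≤ n →
      I n = ∫ s in Set.Ioi (0 : ℝ), 1 / ((b₀ + s) ^ n * Real.sqrt (b₃ + s))) :
    ∀ n : ℕ, 1 ≤ n →
      I (n + 1) = ((2 * (n : ℝ) - 1) / (2 * (n : ℝ) * (b₀ - b₃))) * I n
        - Real.sqrt b₃ / ((n : ℝ) * b₀ ^ n * (b₀ - b₃)) := by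
  intro n hn
  obtain ⟨m, rfl⟩ : ∃ m : ℕ, n = m + 1 := ⟨n - 1, by omega⟩
  have hc : b₀ - b₃ ≠ 0 := sub_ne_zero.mpr hne
  set f : ℕ → ℝ → ℝ := fun k s => 1 / ((b₀ + s) ^ k * Real.sqrt (b₃ + s)) with hfdef
  have hint1 : IntegrableOn (f (m+1)) (Set.Ioi 0) :=
    aux_integrable b₀ b₃ h₀ h₃ (m+1) (by omega)
  have hint2 : IntegrableOn (f (m+2)) (Set.Ioi 0) :=
    aux_integrable b₀ b₃ h₀ h₃ (m+2) (by omega)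
  set g : ℝ → ℝ := fun t => Real.sqrt (b₃ + t) * ((b₀ + t) ^ (m+1))⁻¹ with hgdef
  set g' : ℝ → ℝ := fun s =>
      ((m:ℝ)+1) * (b₀ - b₃) * f (m+2) s - (2*((m:ℝ)+1) - 1)/2 * f (m+1) s with hg'def
  have hderiv : ∀ x ∈ Set.Ioi (0:ℝ), HasDerivAt g (g' x) x := by
    intro x hx
    have hx0 : 0 < x := hx
    exact aux_deriv b₀ b₃ m (by linarith) (by linarith)
  have hgcont : ContinuousWithinAt g (Set.Ici 0) 0 := by
    have : ContinuousAt g 0 := by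
      apply ContinuousAt.mul
      · exact (Real.continuous_sqrt.comp (continuous_const.add continuous_id)).continuousAt
      · exact (((continuous_const.add continuous_id).pow (m+1)).continuousAt).inv₀
          (by show (b₀ + 0) ^ (m+1) ≠ 0; positivity)
    exact this.continuousWithinAt
  have hg'int : IntegrableOn g' (Set.Ioi 0) :=
    (hint2.const_mul _).sub (hint1.const_mul _)
  have htend : Tendsto g atTop (nhds 0) := by
    have h1 : Tendsto (fun s : ℝ => Real.sqrt (b₃ + s)) atTop atTop := by
      have h2 : Tendsto (fun s : ℝ => b₃ + s) atTop atTop :=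
        tendsto_atTop_add_const_left atTop b₃ tendsto_id
      have h3 := (tendsto_rpow_atTop (by norm_num : (0:ℝ) < 1/2)).comp h2
      refine h3.congr (fun s => ?_)
      simp [Real.sqrt_eq_rpow, Function.comp]
    have h4 : Tendsto (fun s : ℝ => 2 * (Real.sqrt (b₃ + s))⁻¹) atTop (nhds 0) := by
      have := h1.inv_tendsto_atTop.const_mul (2:ℝ)
      simpa using this
    apply squeeze_zero' ?_ ?_ h4
    · filter_upwards [eventually_ge_atTop (0:ℝ)] with s hs
      have : 0 < b₀ + s := by linarith
      have : 0 ≤ Real.sqrt (b₃ + s) := Real.sqrt_nonneg _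
      positivity
    · filter_upwards [eventually_ge_atTop (max b₃ 1)] with s hs
      have hs1 : (1:ℝ) ≤ s := le_trans (le_max_right _ _) hs
      have hsb : b₃ ≤ s := le_trans (le_max_left _ _) hs
      have hb0 : (1:ℝ) ≤ b₀ + s := by linarith
      have hb3 : 0 < b₃ + s := by linarith
      have hq0 : 0 < Real.sqrt (b₃ + s) := Real.sqrt_pos.mpr hb3
      have step1 : (b₃ + s) / 2 ≤ b₀ + s := by linarith
      have step2 : (b₃ + s) / 2 ≤ (b₀ + s) ^ (m+1) :=
        le_trans step1 (le_self_pow₀ hb0 (by omega))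
      have step3 : ((b₀ + s) ^ (m+1))⁻¹ ≤ 2 / (b₃ + s) := by
        rw [div_eq_inv_mul]
        rw [inv_le_comm₀ (by positivity) (by positivity)]
        calc (((b₃+s))⁻¹ * 2)⁻¹ = (b₃ + s)/2 := by field_simp
          _ ≤ (b₀ + s)^(m+1) := step2
      show g s ≤ 2 * (Real.sqrt (b₃ + s))⁻¹
      have : g s ≤ Real.sqrt (b₃ + s) * (2 / (b₃ + s)) := by
        apply mul_le_mul_of_nonneg_left step3 (Real.sqrt_nonneg _)
      refine le_trans this (le_of_eq ?_)
      field_simp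
      rw [Real.sq_sqrt hb3.le]
  have hFTC := integral_Ioi_of_hasDerivAt_of_tendsto hgcont hderiv hg'int htend
  have hg0 : g 0 = Real.sqrt b₃ * (b₀ ^ (m+1))⁻¹ := by simp [hgdef]
  have hsplit : ∫ s in Set.Ioi (0:ℝ), g' s
      = ((m:ℝ)+1) * (b₀ - b₃) * (∫ s in Set.Ioi (0:ℝ), f (m+2) s)
        - (2*((m:ℝ)+1) - 1)/2 * (∫ s in Set.Ioi (0:ℝ), f (m+1) s) := by
    rw [hg'def]
    rw [integral_sub (hint2.const_mul _) (hint1.const_mul _)]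
    rw [integral_const_mul, integral_const_mul]
  rw [hg0, hsplit] at hFTC
  have hAB : ((m:ℝ)+1) * (b₀ - b₃) * I (m+2) - (2*((m:ℝ)+1) - 1)/2 * I (m+1)
      = 0 - Real.sqrt b₃ * (b₀ ^ (m+1))⁻¹ := by
    rw [hI (m+1) (by omega), hI (m+2) (by omega)]
    exact hFTC
  have hm1 : ((m:ℝ)+1) ≠ 0 := by positivity
  have hb : (b₀:ℝ) ^ (m+1) ≠ 0 := pow_ne_zero _ h₀.ne'
  have hcast : ((m+1 : ℕ) : ℝ) = (m:ℝ) + 1 := by push_cast; ring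
  rw [show (m+1)+1 = m+2 from rfl] at *
  rw [hcast]
  field_simp at hAB ⊢
  linear_combination hAB
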